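/- Applying the two-qubit phase flip U (|00⟩ ↦ -|00⟩, fixing |01⟩,|10⟩,|11⟩) to the X₁,X₂ registers of the state u⊗u, where u = (|00⟩+|11⟩)/√2 on (X,Z), yields a state on which the measurement {P₀,P₁}⊗{P₀,P₁} (with P₁ = vv*, v = cos(π/8)|00⟩+sin(π/8)|11⟩) produces outcome (0,0) with probability 0 and outcomes (0,1) and (1,0) each with probability 1/2. -/

import Mathlib

open Matrix
open scoped Kronecker ComplexOrder

noncomputable section

/-- `Φ ⊗ id` : apply a linear map `Φ` on `L(X)` to the first tensor factor of `L(X ⊗ Z)`. -/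
def lmapTensorId {n m k : Type*} [Fintype n] [Fintype k]
    (Φ : Matrix n n ℂ →ₗ[ℂ] Matrix m m ℂ)
    (M : Matrix (n × k) (n × k) ℂ) : Matrix (m × k) (m × k) ℂ :=
  fun p q => Φ (fun i j => M (i, p.2) (j, q.2)) p.1 q.1

/-- `id ⊗ Ψ` : apply a linear map `Ψ` on `L(Z)` to the second tensor factor of `L(Y ⊗ Z)`. -/
def idTensorLmap {n k l : Type*} [Fintype n] [Fintype k]
    (Ψ : Matrix k k ℂ →ₗ[ℂ] Matrix l l ℂ)
    (M : Matrix (n × k) (n × k) ℂ) : Matrix (n × l) (n × l) ℂ :=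
  fun p q => Ψ (fun a b => M (p.1, a) (q.1, b)) p.2 q.2

/-- Complete positivity: `Φ ⊗ id_k` maps positive semidefinite operators to positive
semidefinite operators for every finite-dimensional ancilla `k`. -/
def IsCompletelyPositive {n m : Type*} [Fintype n] [Fintype m]
    (Φ : Matrix n n ℂ →ₗ[ℂ] Matrix m m ℂ) : Prop :=
  ∀ (k : Type) [Fintype k] [DecidableEq k],
    ∀ M : Matrix (n × k) (n × k) ℂ, M.PosSemidef → (lmapTensorId Φ M).PosSemidef

def IsTracePreserving {n m : Type*} [Fintype n] [Fintype m]
    (Φ : Matrix n n ℂ →ₗ[ℂ] Matrix m m ℂ) : Prop :=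
  ∀ M : Matrix n n ℂ, (Φ M).trace = M.trace

/-- Partial trace over the first tensor factor. -/
def trFst {n k : Type*} [Fintype n] (M : Matrix (n × k) (n × k) ℂ) : Matrix k k ℂ :=
  fun a b => ∑ i : n, M (i, a) (i, b)

/-- Partial trace over the second tensor factor. -/
def trSnd {n k : Type*} [Fintype k] (M : Matrix (n × k) (n × k) ℂ) : Matrix n n ℂ :=
  fun i j => ∑ a : k, M (i, a) (j, a)

/-- Hilbert-Schmidt inner product `⟨A, B⟩ = Tr(A* B)`. -/
def minner {n : Type*} [Fintype n] (A B : Matrix n n ℂ) : ℂ := (Aᴴ * B).trace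

/-- The square root of a positive semidefinite matrix, as `Matrix.PosSemidef.sqrt` was defined
in Mathlib (December 2024); it has since been removed from Mathlib. -/
def Matrix.PosSemidef.sqrt {n : Type*} [Fintype n] [DecidableEq n] {𝕜 : Type*} [RCLike 𝕜]
    {A : Matrix n n 𝕜} (hA : A.PosSemidef) : Matrix n n 𝕜 :=
  hA.1.eigenvectorUnitary.1 * diagonal ((↑) ∘ (√·) ∘ hA.1.eigenvalues) *
    (star hA.1.eigenvectorUnitary : Matrix n n 𝕜)

open Classical in
/-- Square root of a positive semidefinite matrix (junk value `0` otherwise). -/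
def msqrt {n : Type*} [Fintype n] [DecidableEq n] (M : Matrix n n ℂ) : Matrix n n ℂ :=
  if h : M.PosSemidef then h.sqrt else 0

/-- Trace norm `‖M‖₁ = Tr √(M* M)`. -/
def traceNorm {n : Type*} [Fintype n] [DecidableEq n] (M : Matrix n n ℂ) : ℝ :=
  ((Matrix.posSemidef_conjTranspose_mul_self M).sqrt.trace).re

/-- Fidelity `F(Q, R) = ‖√Q √R‖₁` of positive semidefinite matrices. -/
def fid {n : Type*} [Fintype n] [DecidableEq n] (Q R : Matrix n n ℂ) : ℝ :=
  traceNorm (msqrt Q * msqrt R)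

/-- Choi-Jamiolkowski operator `J(Φ) = Σ_{i,j} Φ(|i⟩⟨j|) ⊗ |i⟩⟨j|`. -/
def choi {n m : Type*} [Fintype n] [DecidableEq n] [Fintype m]
    (Φ : Matrix n n ℂ →ₗ[ℂ] Matrix m m ℂ) : Matrix (m × n) (m × n) ℂ :=
  fun p q => Φ (Matrix.single p.2 q.2 1) p.1 q.1

/-- Tensor product of vectors. -/
def tensorVec {α β : Type*} (v : α → ℂ) (w : β → ℂ) : α × β → ℂ := fun p => v p.1 * w p.2

/-- `u = (|00⟩ + |11⟩)/√2`. -/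
def uVec : Fin 2 × Fin 2 → ℂ := fun p =>
  if p = (0, 0) then (Real.sqrt 2 : ℂ)⁻¹ else if p = (1, 1) then (Real.sqrt 2 : ℂ)⁻¹ else 0

/-- `v = cos(π/8)|00⟩ + sin(π/8)|11⟩`. -/
def vVec : Fin 2 × Fin 2 → ℂ := fun p =>
  if p = (0, 0) then (Real.cos (Real.pi / 8) : ℂ)
  else if p = (1, 1) then (Real.sin (Real.pi / 8) : ℂ) else 0

/-- `w = -sin(π/8)|00⟩ + cos(π/8)|11⟩`. -/
def wVec : Fin 2 × Fin 2 → ℂ := fun p =>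
  if p = (0, 0) then -(Real.sin (Real.pi / 8) : ℂ)
  else if p = (1, 1) then (Real.cos (Real.pi / 8) : ℂ) else 0



lemma minner_add_left' {n : Type*} [Fintype n] (A B C : Matrix n n ℂ) :
    minner (A + B) C = minner A C + minner B C := by
  simp [minner, conjTranspose_add, add_mul, trace_add]

lemma minner_rank_one' {n : Type*} [Fintype n] (a x : n → ℂ) :
    minner (vecMulVec a (star a)) (vecMulVec x (star x))
      = star (star a ⬝ᵥ x) * (star a ⬝ᵥ x) := by
  simp only [minner, Matrix.trace, Matrix.diag, Matrix.mul_apply, conjTranspose_apply,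
    vecMulVec_apply, Pi.star_apply, dotProduct, star_sum, star_mul', star_star,
    Finset.sum_mul_sum]
  refine Finset.sum_congr rfl fun p _ => Finset.sum_congr rfl fun q _ => by ring

lemma kron_rank_one' {n m : Type*} (a : n → ℂ) (b : m → ℂ) :
    (vecMulVec a (star a)) ⊗ₖ (vecMulVec b (star b))
      = vecMulVec (fun p : n × m => a p.1 * b p.2) (star fun p : n × m => a p.1 * b p.2) := by
  ext p q
  simp only [vecMulVec_apply, kroneckerMap_apply, Pi.star_apply, star_mul']
  ring

/-- basis vector `|01⟩`. -/
def eA' : Fin 2 × Fin 2 → ℂ := fun p => if p = (0, 1) then 1 else 0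
/-- basis vector `|10⟩`. -/
def eB' : Fin 2 × Fin 2 → ℂ := fun p => if p = (1, 0) then 1 else 0

lemma P0_decomp' :
    (1 : Matrix (Fin 2 × Fin 2) (Fin 2 × Fin 2) ℂ) - vecMulVec vVec (star vVec)
      = vecMulVec wVec (star wVec) + vecMulVec eA' (star eA') + vecMulVec eB' (star eB') := by
  have ha : Real.sqrt (2 + Real.sqrt 2) * Real.sqrt (2 + Real.sqrt 2) = 2 + Real.sqrt 2 :=
    Real.mul_self_sqrt (by positivity)
  have hb : Real.sqrt (2 - Real.sqrt 2) * Real.sqrt (2 - Real.sqrt 2) = 2 - Real.sqrt 2 :=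
    Real.mul_self_sqrt (by nlinarith [Real.sq_sqrt (by norm_num : (2:ℝ) ≥ 0), Real.sqrt_nonneg 2])
  ext ⟨i, j⟩ ⟨k, l⟩
  fin_cases i <;> fin_cases j <;> fin_cases k <;> fin_cases l <;>
    simp_all [vecMulVec_apply, Matrix.one_apply, vVec, wVec, eA', eB', Complex.ext_iff,
      Complex.conj_ofReal, Prod.ext_iff] <;>
    nlinarith [Real.mul_self_sqrt (show (0:ℝ) ≤ 2 + Real.sqrt 2 by positivity),
      Real.mul_self_sqrt (show (0:ℝ) ≤ 2 - Real.sqrt 2 by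
        nlinarith [Real.sq_sqrt (by norm_num : (2:ℝ) ≥ 0), Real.sqrt_nonneg 2])]

/-- Applying the phase flip `|00⟩ ↦ -|00⟩` on the `X₁, X₂` registers of `u ⊗ u` yields a state
on which the product measurement `{P₀, P₁} ⊗ {P₀, P₁}` (with `P₁ = vv*`) gives outcome
`(0,0)` with probability `0` and each of `(0,1)` and `(1,0)` with probability `1/2`. -/
theorem stmt4 :
    let P₁ : Matrix (Fin 2 × Fin 2) (Fin 2 × Fin 2) ℂ := vecMulVec vVec (star vVec)
    let P₀ : Matrix (Fin 2 × Fin 2) (Fin 2 × Fin 2) ℂ := 1 - P₁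
    -- final state vector: phase flip on the pair of `X` registers applied to `u ⊗ u`
    let ξ : (Fin 2 × Fin 2) × (Fin 2 × Fin 2) → ℂ := fun p =>
      (if p.1.1 = 0 ∧ p.2.1 = 0 then (-1 : ℂ) else 1) * tensorVec uVec uVec p
    minner (P₀ ⊗ₖ P₀) (vecMulVec ξ (star ξ)) = 0 ∧
      minner (P₀ ⊗ₖ P₁) (vecMulVec ξ (star ξ)) = 1 / 2 ∧
      minner (P₁ ⊗ₖ P₀) (vecMulVec ξ (star ξ)) = 1 / 2 := by
  intro P₁ P₀ ξ
  simp only [P₀, P₁, P0_decomp']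
  simp only [add_kronecker, kronecker_add, minner_add_left', kron_rank_one', minner_rank_one']
  simp only [dotProduct, Fintype.sum_prod_type, Fin.sum_univ_two, ξ, tensorVec, uVec, vVec,
    wVec, eA', eB', Pi.star_apply, Prod.ext_iff, star_mul', star_neg, star_one, star_zero,
    Complex.star_def, Complex.conj_ofReal, map_inv₀]
  norm_num [map_ofNat]
  have hr : ((Real.sqrt 2 : ℝ) : ℂ) ≠ 0 := by norm_cast; positivity
  have ha : ((Real.sqrt (2 + Real.sqrt 2) : ℝ) : ℂ) * ((Real.sqrt (2 + Real.sqrt 2) : ℝ) : ℂ)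
      = 2 + ((Real.sqrt 2 : ℝ) : ℂ) := by
    norm_cast; rw [Real.mul_self_sqrt (by positivity)]
  have hb : ((Real.sqrt (2 - Real.sqrt 2) : ℝ) : ℂ) * ((Real.sqrt (2 - Real.sqrt 2) : ℝ) : ℂ)
      = 2 - ((Real.sqrt 2 : ℝ) : ℂ) := by
    norm_cast
    rw [Real.mul_self_sqrt (by nlinarith [Real.sq_sqrt (by norm_num : (2:ℝ) ≥ 0), Real.sqrt_nonneg 2])]
  have hab : ((Real.sqrt (2 + Real.sqrt 2) : ℝ) : ℂ) * ((Real.sqrt (2 - Real.sqrt 2) : ℝ) : ℂ)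
      = ((Real.sqrt 2 : ℝ) : ℂ) := by
    norm_cast
    rw [← Real.sqrt_mul (by positivity)]
    congr 1
    nlinarith [Real.sq_sqrt (by norm_num : (2:ℝ) ≥ 0), Real.sqrt_nonneg 2]
  have h2 : ((Real.sqrt 2 : ℝ) : ℂ) * ((Real.sqrt 2 : ℝ) : ℂ) = 2 := by
    norm_cast; rw [Real.mul_self_sqrt (by norm_num)]
  set r : ℂ := ((Real.sqrt 2 : ℝ) : ℂ) with hrdef
  set a : ℂ := ((Real.sqrt (2 + Real.sqrt 2) : ℝ) : ℂ) with hadef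
  set b : ℂ := ((Real.sqrt (2 - Real.sqrt 2) : ℝ) : ℂ) with hbdef
  have hrinv : r⁻¹ = r / 2 := by
    rw [eq_div_iff (two_ne_zero)]
    rw [inv_mul_eq_iff_eq_mul₀ hr]
    linear_combination -h2
  rw [hrinv]
  have key : b / 2 * (a / 2) * (r / 2 * (r / 2)) + -(b / 2 * (b / 2) * (r / 2 * (r / 2))) +
        (a / 2 * (a / 2) * (r / 2 * (r / 2))) + a / 2 * (b / 2) * (r / 2 * (r / 2)) = r / 2 := by
    linear_combination (r*r/16)*ha - (r*r/16)*hb + (r*r/8)*hab + (r/4)*h2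
  refine ⟨?_, ?_, ?_⟩
  · linear_combination (r*r/16)*ha - (r*r/16)*hb - (r*r/8)*hab
  · rw [show b / 2 * (a / 2) * (r / 2 * (r / 2)) + -(b / 2 * (b / 2) * (r / 2 * (r / 2))) +
        (a / 2 * (a / 2) * (r / 2 * (r / 2)) + a / 2 * (b / 2) * (r / 2 * (r / 2))) = r / 2 from by
      linear_combination key]
    linear_combination h2/4
  · rw [show a / 2 * (b / 2) * (r / 2 * (r / 2)) + a / 2 * (a / 2) * (r / 2 * (r / 2)) +
        (-(b / 2 * (b / 2) * (r / 2 * (r / 2))) + b / 2 * (a / 2) * (r / 2 * (r / 2))) = r / 2 from by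
      linear_combination key]
    linear_combination h2/4

end
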